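/- arXiv:2108.12994 — 2 statements merged into one kernel-verified Lean document; each statement's English description precedes it below -/
import Mathlib

section
/- Let G be a connected finite simple graph with χ(G) = Δ(G) and vs_χ(G) = 1. Then there exists a vertex v of G such that the degree of v in G equals Δ(G) and χ(G − v) = Δ(G) − 1. -/
open SimpleGraph Function

/-- The chromatic number of a graph, as a natural number (for finite graphs this
is the usual chromatic number). -/
noncomputable def chromNum {V : Type*} (G : SimpleGraph V) : ℕ :=
  sInf {n : ℕ | G.Colorable n}

/-- The maximum degree Δ(G) of a finite graph. -/
noncomputable def maxDeg {V : Type*} [Fintype V] (G : SimpleGraph V) : ℕ :=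
  Finset.univ.sup fun v => Nat.card (G.neighborSet v)

/-- The chromatic vertex stability number: the minimum number of vertices whose
deletion results in a graph with chromatic number χ(G) − 1. -/
noncomputable def vsChi {V : Type*} [Fintype V] (G : SimpleGraph V) : ℕ :=
  sInf {k : ℕ | ∃ S : Finset V, S.card = k ∧
    chromNum (G.induce ((S : Set V))ᶜ) = chromNum G - 1}

/-- The independent chromatic vertex stability number: the minimum size of an
independent set of vertices whose deletion results in a graph with chromatic
number χ(G) − 1. -/
noncomputable def ivsChi {V : Type*} [Fintype V] (G : SimpleGraph V) : ℕ :=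
  sInf {k : ℕ | ∃ S : Finset V, S.card = k ∧
    (∀ u ∈ S, ∀ v ∈ S, ¬ G.Adj u v) ∧
    chromNum (G.induce ((S : Set V))ᶜ) = chromNum G - 1}

/-- The chromatic edge stability number: the minimum number of edges whose
deletion results in a graph with chromatic number χ(G) − 1. -/
noncomputable def esChi {V : Type*} (G : SimpleGraph V) : ℕ :=
  sInf {k : ℕ | ∃ F : Finset (Sym2 V), ↑F ⊆ G.edgeSet ∧ F.card = k ∧
    chromNum (G.deleteEdges ↑F) = chromNum G - 1}

lemma chromNum_colorable' {V : Type*} [Finite V] (G : SimpleGraph V) :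
    G.Colorable (chromNum G) := by
  cases nonempty_fintype V
  exact Nat.sInf_mem (s := {n : ℕ | G.Colorable n}) ⟨Fintype.card V, (show G.Colorable (Fintype.card V) from G.colorable_of_fintype)⟩

lemma chromNum_le_succ_del {V : Type*} [Finite V] (G : SimpleGraph V) (w : V) :
    chromNum G ≤ chromNum (G.induce ({w} : Set V)ᶜ) + 1 := by
  classical
  obtain ⟨c⟩ := chromNum_colorable' (G.induce ({w} : Set V)ᶜ)
  set n := chromNum (G.induce ({w} : Set V)ᶜ) with hn
  apply Nat.sInf_le
  refine ⟨Coloring.mk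
    (fun x => if h : x = w then Fin.last n else (c ⟨x, by simp [h]⟩).castSucc) ?_⟩
  intro a b hab
  by_cases ha : a = w <;> by_cases hb : b = w
  · exact absurd (ha ▸ hb ▸ hab) (G.irrefl)
  · simp only [dif_pos ha, dif_neg hb]
    exact fun h => absurd h.symm (Fin.castSucc_lt_last _).ne
  · simp only [dif_neg ha, dif_pos hb]
    exact (Fin.castSucc_lt_last _).ne
  · simp only [dif_neg ha, dif_neg hb]
    intro h
    have := c.valid (v := ⟨a, by simp [ha]⟩) (w := ⟨b, by simp [hb]⟩) hab
    exact this (Fin.castSucc_injective _ h)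

lemma step_lemma {V : Type*} [Fintype V] (G : SimpleGraph V)
    (hchi : chromNum G = maxDeg G)
    {w : V} (hw : chromNum (G.induce ({w} : Set V)ᶜ) = maxDeg G - 1)
    (hdw : Nat.card (G.neighborSet w) ≠ maxDeg G)
    {u : V} (hadj : G.Adj w u) :
    chromNum (G.induce ({u} : Set V)ᶜ) = maxDeg G - 1 := by
  classical
  set D := maxDeg G with hD
  -- D ≥ 1
  have hNfin : Finite (G.neighborSet w) := Set.toFinite _
  have hNne : Nonempty (G.neighborSet w) := ⟨⟨u, hadj⟩⟩
  have hcardpos : 0 < Nat.card (G.neighborSet w) := Nat.card_pos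
  have hdle : Nat.card (G.neighborSet w) ≤ D := by
    rw [hD, maxDeg]; exact Finset.le_sup (f := fun v => Nat.card (G.neighborSet v)) (Finset.mem_univ w)
  have hD1 : 1 ≤ D := le_trans hcardpos hdle
  -- coloring of G - w with D - 1 colors
  obtain ⟨c⟩ : (G.induce ({w} : Set V)ᶜ).Colorable (D - 1) := hw ▸ chromNum_colorable' _
  -- restriction to neighbors of w
  set f : G.neighborSet w → Fin (D - 1) :=
    fun x => c ⟨x.1, by simp [(x.2 : G.Adj w x.1).ne']⟩ with hf
  -- f is surjective, else we could extend c to G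
  have hsurj : Surjective f := by
    by_contra hns
    rw [Surjective] at hns
    push_neg at hns
    obtain ⟨a, ha⟩ := hns
    have : G.Colorable (D - 1) := by
      refine ⟨Coloring.mk (fun x => if h : x = w then a else c ⟨x, by simp [h]⟩) ?_⟩
      intro x y hxy
      by_cases hx : x = w <;> by_cases hy : y = w
      · exact absurd (hx ▸ hy ▸ hxy) (G.irrefl)
      · simp only [dif_pos hx, dif_neg hy]
        exact fun h => ha ⟨y, hx ▸ hxy⟩ h.symm
      · simp only [dif_neg hx, dif_pos hy]
        exact fun h => ha ⟨x, hy ▸ hxy.symm⟩ h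
      · simp only [dif_neg hx, dif_neg hy]
        exact c.valid (v := ⟨x, by simp [hx]⟩) (w := ⟨y, by simp [hy]⟩) hxy
    have : chromNum G ≤ D - 1 := Nat.sInf_le this
    omega
  -- hence d(w) = D - 1 and f is injective
  have hcard2 : D - 1 ≤ Nat.card (G.neighborSet w) := by
    have := Nat.card_le_card_of_surjective f hsurj
    simpa using this
  have hcardeq : Nat.card (G.neighborSet w) = D - 1 := by omega
  have hinj : Injective f := by
    have : Nat.card (G.neighborSet w) ≤ Nat.card (Fin (D - 1)) := by
      rw [hcardeq]; simp [Nat.card_eq_fintype_card]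
    exact (hsurj.bijective_of_nat_card_le this).injective
  -- swap: color G - u with D - 1 colors, giving w the color of u
  have hle : chromNum (G.induce ({u} : Set V)ᶜ) ≤ D - 1 := by
    apply Nat.sInf_le
    refine ⟨Coloring.mk
      (fun x => if h : (x : V) = w then f ⟨u, hadj⟩ else c ⟨x, by simp [h]⟩) ?_⟩
    rintro ⟨x, hx⟩ ⟨y, hy⟩ hxy
    have hxy' : G.Adj x y := hxy
    simp only [Set.mem_compl_iff, Set.mem_singleton_iff] at hx hy
    by_cases hxw : x = w <;> by_cases hyw : y = w
    · exact absurd (hxw ▸ hyw ▸ hxy') (G.irrefl)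
    · simp only [dif_pos hxw, dif_neg hyw]
      intro h
      have hyN : y ∈ G.neighborSet w := hxw ▸ hxy'
      have := hinj (a₁ := ⟨u, hadj⟩) (a₂ := ⟨y, hyN⟩) (by exact h)
      exact hy (congrArg Subtype.val this).symm
    · simp only [dif_neg hxw, dif_pos hyw]
      intro h
      have hxN : x ∈ G.neighborSet w := hyw ▸ hxy'.symm
      have := hinj (a₁ := ⟨u, hadj⟩) (a₂ := ⟨x, hxN⟩) (by exact h.symm)
      exact hx (congrArg Subtype.val this).symm
    · simp only [dif_neg hxw, dif_neg hyw]
      exact c.valid (v := ⟨x, by simp [hxw]⟩) (w := ⟨y, by simp [hyw]⟩) hxy'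
  have hge := chromNum_le_succ_del G u
  omega

lemma walk_lemma {V : Type*} [Fintype V] (G : SimpleGraph V)
    (hchi : chromNum G = maxDeg G) :
    ∀ {v m : V} (_ : G.Walk v m),
      Nat.card (G.neighborSet m) = maxDeg G →
      chromNum (G.induce ({v} : Set V)ᶜ) = maxDeg G - 1 →
      ∃ x : V, Nat.card (G.neighborSet x) = maxDeg G ∧
        chromNum (G.induce ({x} : Set V)ᶜ) = maxDeg G - 1 := by
  intro v m p
  induction p with
  | nil => exact fun hm hv => ⟨_, hm, hv⟩
  | @cons a b c h p ih =>
    intro hm hv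
    by_cases hd : Nat.card (G.neighborSet a) = maxDeg G
    · exact ⟨a, hd, hv⟩
    · exact ih hm (step_lemma G hchi hv hd h)

/-- Let $G$ be a connected finite simple graph with $χ(G) = Δ(G)$ and
$vs_χ(G) = 1$. Then there exists a vertex $v$ with $d_G(v) = Δ(G)$ and
$χ(G - v) = Δ(G) - 1$. -/
theorem stmt_3 {V : Type*} [Fintype V] (G : SimpleGraph V)
    (hconn : G.Connected)
    (hchi : chromNum G = maxDeg G)
    (hvs : vsChi G = 1) :
    ∃ v : V, Nat.card (G.neighborSet v) = maxDeg G ∧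
      chromNum (G.induce ({v} : Set V)ᶜ) = maxDeg G - 1 := by
  classical
  have hV : Nonempty V := hconn.nonempty
  -- χ(G) ≥ 1
  have hchi1 : 1 ≤ chromNum G := by
    rcases Nat.eq_zero_or_pos (chromNum G) with h0 | h
    · obtain ⟨c⟩ := chromNum_colorable' G
      rw [h0] at c
      exact (c hV.some).elim0
    · exact h
  -- extract the vertex from vsChi = 1
  have hne : {k : ℕ | ∃ S : Finset V, S.card = k ∧
      chromNum (G.induce ((S : Set V))ᶜ) = chromNum G - 1}.Nonempty := by
    by_contra hemp
    rw [Set.not_nonempty_iff_eq_empty] at hemp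
    rw [vsChi, hemp, Nat.sInf_empty] at hvs
    exact absurd hvs one_ne_zero.symm
  have h1 : 1 ∈ {k : ℕ | ∃ S : Finset V, S.card = k ∧
      chromNum (G.induce ((S : Set V))ᶜ) = chromNum G - 1} := by
    have h := Nat.sInf_mem hne
    rwa [show sInf {k : ℕ | ∃ S : Finset V, S.card = k ∧
      chromNum (G.induce ((S : Set V))ᶜ) = chromNum G - 1} = 1 from hvs] at h
  obtain ⟨S, hS1, hSchi⟩ := h1
  obtain ⟨v0, rfl⟩ := Finset.card_eq_one.mp hS1
  rw [Finset.coe_singleton] at hSchi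
  rw [hchi] at hSchi
  -- a vertex of maximum degree
  obtain ⟨m, -, hm⟩ := Finset.exists_mem_eq_sup Finset.univ Finset.univ_nonempty
    (fun v => Nat.card (G.neighborSet v))
  obtain ⟨p⟩ := hconn v0 m
  exact walk_lemma G hchi p hm.symm hSchi
end

section
/- If G is a finite simple graph with at least one edge and χ(G) > Δ(G)/2 + 1, then vs_χ(G) = es_χ(G). -/
open SimpleGraph

section Aux
variable {V : Type*}

lemma colorable_chromNum [Fintype V] (G : SimpleGraph V) : G.Colorable (chromNum G) :=
  Nat.sInf_mem (⟨Fintype.card V, G.colorable_of_fintype⟩ : {n : ℕ | G.Colorable n}.Nonempty)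

lemma chromNum_le {G : SimpleGraph V} {n : ℕ} (h : G.Colorable n) : chromNum G ≤ n :=
  Nat.sInf_le h

lemma colorable_of_chromNum_le [Fintype V] {G : SimpleGraph V} {n : ℕ}
    (h : chromNum G ≤ n) : G.Colorable n :=
  (colorable_chromNum G).mono h

lemma two_le_chromNum [Fintype V] {G : SimpleGraph V} (hedge : G.edgeSet.Nonempty) :
    2 ≤ chromNum G := by
  by_contra hlt
  push_neg at hlt
  have h1 : G.Colorable 1 := colorable_of_chromNum_le (by omega)
  obtain ⟨e, he⟩ := hedge
  induction e using Sym2.ind with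
  | _ u v =>
    rw [SimpleGraph.mem_edgeSet] at he
    exact h1.some.valid he (Subsingleton.elim _ _)

lemma chromNum_induce_univ (G : SimpleGraph V) :
    chromNum (G.induce Set.univ) = chromNum G := by
  unfold chromNum
  congr 1
  ext n
  exact ⟨fun h => h.of_hom (induceUnivIso G).symm.toEmbedding.toHom,
         fun h => h.of_hom (induceUnivIso G).toEmbedding.toHom⟩

lemma chromNum_induce_empty (G : SimpleGraph V) :
    chromNum (G.induce ((↑(∅ : Finset V) : Set V))ᶜ) = chromNum G := by
  have hs : ((↑(∅ : Finset V) : Set V))ᶜ = Set.univ := by simp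
  rw [hs, chromNum_induce_univ]

/-- Putting back one vertex costs at most one extra color. -/
lemma step_vertex [DecidableEq V] (G : SimpleGraph V) {n : ℕ} {S : Finset V} {a : V} (ha : a ∈ S)
    (h : (G.induce ((S : Set V))ᶜ).Colorable n) :
    (G.induce ((↑(S.erase a) : Set V))ᶜ).Colorable (n + 1) := by
  classical
  obtain ⟨c⟩ := h
  refine ⟨SimpleGraph.Coloring.mk
    (fun v => if hv : (v : V) = a then Fin.last n else
      Fin.castSucc (c ⟨(v : V), by
        intro hmem
        have hv2 := v.2
        simp only [Set.mem_compl_iff, Finset.mem_coe, Finset.mem_erase] at hv2 hmem ⊢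
        exact hv2 ⟨hv, hmem⟩⟩)) ?_⟩
  rintro ⟨v, hv⟩ ⟨w, hw⟩ hadj
  have hGadj : G.Adj v w := hadj
  by_cases hva : v = a <;> by_cases hwa : w = a
  · exact absurd (hva.trans hwa.symm) (G.ne_of_adj hGadj)
  · simp only [dif_pos hva, dif_neg hwa]
    exact (Fin.castSucc_lt_last _).ne'
  · simp only [dif_neg hva, dif_pos hwa]
    exact (Fin.castSucc_lt_last _).ne
  · simp only [dif_neg hva, dif_neg hwa]
    intro heq
    have hvS : v ∈ ((S : Set V))ᶜ := by
      simp only [Set.mem_compl_iff, Finset.mem_coe, Finset.mem_erase] at hv ⊢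
      exact fun hm => hv ⟨hva, hm⟩
    have hwS : w ∈ ((S : Set V))ᶜ := by
      simp only [Set.mem_compl_iff, Finset.mem_coe, Finset.mem_erase] at hw ⊢
      exact fun hm => hw ⟨hwa, hm⟩
    have hadj' : (G.induce ((S : Set V))ᶜ).Adj ⟨v, hvS⟩ ⟨w, hwS⟩ := hGadj
    exact c.valid hadj' (Fin.castSucc_injective n heq)

/-- Putting back one edge costs at most one extra color. -/
lemma step_edge [DecidableEq (Sym2 V)] (G : SimpleGraph V) {n : ℕ} {F : Finset (Sym2 V)} {e : Sym2 V} (he : e ∈ F)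
    (h : (G.deleteEdges ↑F).Colorable n) :
    (G.deleteEdges ↑(F.erase e)).Colorable (n + 1) := by
  classical
  obtain ⟨c⟩ := h
  revert he
  induction e using Sym2.ind with
  | _ u w =>
    intro he
    refine ⟨SimpleGraph.Coloring.mk
      (fun v => if v = u then Fin.last n else Fin.castSucc (c v)) ?_⟩
    intro x y hadj
    rw [SimpleGraph.deleteEdges_adj] at hadj
    obtain ⟨hGadj, hmem⟩ := hadj
    by_cases hxu : x = u <;> by_cases hyu : y = u
    · exact absurd (hxu.trans hyu.symm) (G.ne_of_adj hGadj)
    · simp only [if_pos hxu, if_neg hyu]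
      exact (Fin.castSucc_lt_last _).ne'
    · simp only [if_neg hxu, if_pos hyu]
      exact (Fin.castSucc_lt_last _).ne
    · simp only [if_neg hxu, if_neg hyu]
      intro heq
      have hne : s(x, y) ≠ s(u, w) := by
        intro hxy
        rcases Sym2.eq_iff.mp hxy with ⟨rfl, rfl⟩ | ⟨rfl, rfl⟩
        · exact hxu rfl
        · exact hyu rfl
      have hnot : s(x, y) ∉ F := fun hin => hmem (by
        simp only [Finset.coe_erase, Set.mem_diff, Set.mem_singleton_iff]
        exact ⟨hin, hne⟩)
      have hadj' : (G.deleteEdges ↑F).Adj x y := by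
        rw [SimpleGraph.deleteEdges_adj]
        exact ⟨hGadj, fun hin => hnot hin⟩
      exact c.valid hadj' (Fin.castSucc_injective n heq)

end Aux

section Aux2
variable {V : Type*}

lemma vertex_IV [Fintype V] (G : SimpleGraph V) (hchi2 : 2 ≤ chromNum G) (S0 : Finset V)
    (h : (G.induce ((S0 : Set V))ᶜ).Colorable (chromNum G - 1)) :
    ∃ S : Finset V, S.card ≤ S0.card ∧
      chromNum (G.induce ((S : Set V))ᶜ) = chromNum G - 1 := by
  classical
  set χ := chromNum G with hχ
  set T : Finset (Finset V) :=
    S0.powerset.filter (fun S => chromNum (G.induce ((S : Set V))ᶜ) ≤ χ - 1) with hT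
  have hS0T : S0 ∈ T := by
    simp only [hT, Finset.mem_filter, Finset.mem_powerset]
    exact ⟨le_refl _, chromNum_le h⟩
  obtain ⟨S, hST, hmin⟩ := T.exists_min_image Finset.card ⟨S0, hS0T⟩
  simp only [hT, Finset.mem_filter, Finset.mem_powerset] at hST
  obtain ⟨hSsub, hSle⟩ := hST
  refine ⟨S, Finset.card_le_card hSsub, le_antisymm hSle ?_⟩
  rcases S.eq_empty_or_nonempty with rfl | ⟨a, haS⟩
  · rw [chromNum_induce_empty] at hSle; omega
  · have h1 : χ - 1 < chromNum (G.induce ((↑(S.erase a) : Set V))ᶜ) := by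
      by_contra hle
      push_neg at hle
      have hmem : S.erase a ∈ T := by
        simp only [hT, Finset.mem_filter, Finset.mem_powerset]
        exact ⟨(S.erase_subset a).trans hSsub, hle⟩
      have := hmin _ hmem
      have hcard := Finset.card_erase_of_mem haS
      have hpos := Finset.card_pos.mpr ⟨a, haS⟩
      omega
    have h2 := step_vertex G haS (colorable_chromNum (G.induce ((S : Set V))ᶜ))
    have h3 := chromNum_le h2
    omega

lemma edge_IV [Fintype V] (G : SimpleGraph V) (hchi2 : 2 ≤ chromNum G)
    (F0 : Finset (Sym2 V)) (hF0 : ↑F0 ⊆ G.edgeSet)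
    (h : (G.deleteEdges ↑F0).Colorable (chromNum G - 1)) :
    ∃ F : Finset (Sym2 V), ↑F ⊆ G.edgeSet ∧ F.card ≤ F0.card ∧
      chromNum (G.deleteEdges ↑F) = chromNum G - 1 := by
  classical
  set χ := chromNum G with hχ
  set T : Finset (Finset (Sym2 V)) :=
    F0.powerset.filter (fun F => chromNum (G.deleteEdges ↑F) ≤ χ - 1) with hT
  have hF0T : F0 ∈ T := by
    simp only [hT, Finset.mem_filter, Finset.mem_powerset]
    exact ⟨le_refl _, chromNum_le h⟩
  obtain ⟨F, hFT, hmin⟩ := T.exists_min_image Finset.card ⟨F0, hF0T⟩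
  simp only [hT, Finset.mem_filter, Finset.mem_powerset] at hFT
  obtain ⟨hFsub, hFle⟩ := hFT
  refine ⟨F, (Finset.coe_subset.mpr hFsub).trans hF0, Finset.card_le_card hFsub,
    le_antisymm hFle ?_⟩
  rcases F.eq_empty_or_nonempty with rfl | ⟨e, heF⟩
  · simp only [Finset.coe_empty, SimpleGraph.deleteEdges_empty] at hFle
    omega
  · have h1 : χ - 1 < chromNum (G.deleteEdges ↑(F.erase e)) := by
      by_contra hle
      push_neg at hle
      have hmem : F.erase e ∈ T := by
        simp only [hT, Finset.mem_filter, Finset.mem_powerset]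
        exact ⟨(F.erase_subset e).trans hFsub, hle⟩
      have := hmin _ hmem
      have hcard := Finset.card_erase_of_mem heF
      have hpos := Finset.card_pos.mpr ⟨e, heF⟩
      omega
    have h2 := step_edge G heF (colorable_chromNum (G.deleteEdges ↑F))
    have h3 := chromNum_le h2
    omega

lemma card_neighbor_le_maxDeg [Fintype V] (G : SimpleGraph V) (v : V) :
    Nat.card (G.neighborSet v) ≤ maxDeg G := by
  unfold maxDeg
  exact Finset.le_sup (f := fun v => Nat.card (G.neighborSet v)) (Finset.mem_univ v)

lemma maxDeg_deleteEdges_le [Fintype V] (G : SimpleGraph V) (s : Set (Sym2 V)) :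
    maxDeg (G.deleteEdges s) ≤ maxDeg G := by
  unfold maxDeg
  refine Finset.sup_le fun v _ => ?_
  have hsub : (G.deleteEdges s).neighborSet v ⊆ G.neighborSet v := by
    intro w hw
    rw [SimpleGraph.mem_neighborSet] at hw ⊢
    exact ((SimpleGraph.deleteEdges_adj).mp hw).1
  calc Nat.card ((G.deleteEdges s).neighborSet v)
      = ((G.deleteEdges s).neighborSet v).ncard := Nat.card_coe_set_eq _
    _ ≤ (G.neighborSet v).ncard := Set.ncard_le_ncard hsub (Set.toFinite _)
    _ = Nat.card (G.neighborSet v) := (Nat.card_coe_set_eq _).symm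
    _ ≤ maxDeg G := card_neighbor_le_maxDeg G v

end Aux2

section Aux3
variable {V : Type*}

lemma greedy [Fintype V] {n : ℕ} (hn : 0 < n) (S : Finset V) :
    ∀ G : SimpleGraph V, maxDeg G < 2 * n →
      (G.induce ((S : Set V))ᶜ).Colorable n →
      ∃ F : Finset (Sym2 V), ↑F ⊆ G.edgeSet ∧ F.card ≤ S.card ∧
        (G.deleteEdges ↑F).Colorable n := by
  classical
  induction S using Finset.induction_on with
  | empty =>
    intro G _ h
    refine ⟨∅, by simp, by simp, ?_⟩
    rw [Finset.coe_empty, SimpleGraph.deleteEdges_empty]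
    have hs : ((↑(∅ : Finset V) : Set V))ᶜ = Set.univ := by simp
    rw [hs] at h
    exact h.of_hom (induceUnivIso G).symm.toEmbedding.toHom
  | @insert a S0 ha IH =>
    intro G hΔ h
    obtain ⟨c⟩ := h
    set f : V → Fin n := fun v =>
      if hv : v ∈ ((↑(insert a S0) : Set V))ᶜ then c ⟨v, hv⟩ else ⟨0, hn⟩ with hf
    set N : Finset V := Finset.univ.filter (fun v => G.Adj a v ∧ v ∉ insert a S0) with hN
    have hNdeg : N.card ≤ maxDeg G := by
      have hsub : (↑N : Set V) ⊆ G.neighborSet a := by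
        intro v hv
        simp only [hN, Finset.coe_filter, Set.mem_setOf_eq, Finset.mem_univ, true_and] at hv
        exact hv.1
      calc N.card = (↑N : Set V).ncard := (Set.ncard_coe_finset N).symm
        _ ≤ (G.neighborSet a).ncard := Set.ncard_le_ncard hsub (Set.toFinite _)
        _ = Nat.card (G.neighborSet a) := (Nat.card_coe_set_eq _).symm
        _ ≤ maxDeg G := card_neighbor_le_maxDeg G a
    have hex : ∃ i : Fin n, (N.filter (fun v => f v = i)).card ≤ 1 := by
      by_contra hcon
      push_neg at hcon
      have hsum : N.card = ∑ i : Fin n, (N.filter (fun v => f v = i)).card :=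
        Finset.card_eq_sum_card_fiberwise (fun v _ => Finset.mem_univ (f v))
      have h2n : 2 * n ≤ N.card := by
        rw [hsum]
        calc 2 * n = ∑ _i : Fin n, 2 := by simp [mul_comm]
          _ ≤ _ := Finset.sum_le_sum (fun i _ => hcon i)
      omega
    obtain ⟨i, hi⟩ := hex
    set M := N.filter (fun v => f v = i) with hM
    set F1 : Finset (Sym2 V) := M.image (fun v => s(a, v)) with hF1
    have hF1card : F1.card ≤ 1 := (Finset.card_image_le).trans hi
    have hF1sub : ↑F1 ⊆ G.edgeSet := by
      intro e he
      simp only [hF1, Finset.coe_image, Set.mem_image, Finset.mem_coe] at he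
      obtain ⟨v, hvM, rfl⟩ := he
      rw [SimpleGraph.mem_edgeSet]
      have hvN : v ∈ N := Finset.mem_of_mem_filter v hvM
      simp only [hN, Finset.mem_filter] at hvN
      exact hvN.2.1
    set G' := G.deleteEdges ↑F1 with hG'
    have hc' : (G'.induce ((↑S0 : Set V))ᶜ).Colorable n := by
      refine ⟨SimpleGraph.Coloring.mk (fun v => if (v : V) = a then i else f v) ?_⟩
      rintro ⟨v, hv⟩ ⟨w, hw⟩ hadj
      have hadj' : G'.Adj v w := hadj
      rw [hG', SimpleGraph.deleteEdges_adj] at hadj'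
      obtain ⟨hGadj, hnF1⟩ := hadj'
      simp only [Set.mem_compl_iff, Finset.mem_coe] at hv hw
      by_cases hva : v = a <;> by_cases hwa : w = a
      · exact absurd (hva.trans hwa.symm) (G.ne_of_adj hGadj)
      · simp only [if_pos hva, if_neg hwa]
        intro heq
        apply hnF1
        subst hva
        have hwM : w ∈ M := by
          simp only [hM, hN, Finset.mem_filter, Finset.mem_univ, true_and]
          exact ⟨⟨hGadj, fun hm => (Finset.mem_insert.mp hm).elim hwa hw⟩, heq.symm⟩
        simp only [hF1, Finset.coe_image, Set.mem_image, Finset.mem_coe]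
        exact ⟨w, hwM, rfl⟩
      · simp only [if_neg hva, if_pos hwa]
        intro heq
        apply hnF1
        subst hwa
        have hvM : v ∈ M := by
          simp only [hM, hN, Finset.mem_filter, Finset.mem_univ, true_and]
          exact ⟨⟨hGadj.symm, fun hm => (Finset.mem_insert.mp hm).elim hva hv⟩, heq⟩
        simp only [hF1, Finset.coe_image, Set.mem_image, Finset.mem_coe]
        exact ⟨v, hvM, Sym2.eq_swap⟩
      · simp only [if_neg hva, if_neg hwa]
        intro heq
        have hvmem : v ∈ ((↑(insert a S0) : Set V))ᶜ := by
          simp only [Set.mem_compl_iff, Finset.coe_insert, Set.mem_insert_iff, Finset.mem_coe]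
          push_neg
          exact ⟨hva, hv⟩
        have hwmem : w ∈ ((↑(insert a S0) : Set V))ᶜ := by
          simp only [Set.mem_compl_iff, Finset.coe_insert, Set.mem_insert_iff, Finset.mem_coe]
          push_neg
          exact ⟨hwa, hw⟩
        have hadj2 : (G.induce ((↑(insert a S0) : Set V))ᶜ).Adj ⟨v, hvmem⟩ ⟨w, hwmem⟩ := hGadj
        apply c.valid hadj2
        have hfv : f v = c ⟨v, hvmem⟩ := by rw [hf]; exact dif_pos hvmem
        have hfw : f w = c ⟨w, hwmem⟩ := by rw [hf]; exact dif_pos hwmem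
        rw [← hfv, ← hfw]
        exact heq
    have hΔ' : maxDeg G' < 2 * n := lt_of_le_of_lt (maxDeg_deleteEdges_le G _) hΔ
    obtain ⟨F2, hF2sub, hF2card, hF2col⟩ := IH G' hΔ' hc'
    refine ⟨F1 ∪ F2, ?_, ?_, ?_⟩
    · intro e he
      simp only [Finset.coe_union, Set.mem_union] at he
      rcases he with h1 | h2
      · exact hF1sub h1
      · have := hF2sub h2
        rw [hG', SimpleGraph.edgeSet_deleteEdges] at this
        exact this.1
    · calc (F1 ∪ F2).card ≤ F1.card + F2.card := Finset.card_union_le _ _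
        _ ≤ 1 + S0.card := add_le_add hF1card hF2card
        _ = (insert a S0).card := by rw [Finset.card_insert_of_notMem ha, add_comm]
    · have heq : G.deleteEdges ↑(F1 ∪ F2) = G'.deleteEdges ↑F2 := by
        rw [hG', SimpleGraph.deleteEdges_deleteEdges, Finset.coe_union]
      rw [heq]
      exact hF2col

end Aux3


/-- If $G$ is a finite simple graph with at least one edge and
$χ(G) > Δ(G)/2 + 1$, then $vs_χ(G) = es_χ(G)$. -/
theorem stmt_4 {V : Type*} [Fintype V] (G : SimpleGraph V)
    (hedge : G.edgeSet.Nonempty)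
    (hchi : (chromNum G : ℝ) > (maxDeg G : ℝ) / 2 + 1) :
    vsChi G = esChi G := by
  classical
  have hchi2 : 2 ≤ chromNum G := two_le_chromNum hedge
  have hΔ : maxDeg G < 2 * (chromNum G - 1) := by
    have h1 : (maxDeg G : ℝ) < 2 * ((chromNum G : ℝ) - 1) := by linarith
    have h2 : ((chromNum G : ℕ) : ℝ) - 1 = ((chromNum G - 1 : ℕ) : ℝ) := by
      rw [Nat.cast_sub (by omega)]; simp
    rw [h2] at h1
    exact_mod_cast h1
  have hesne : {k : ℕ | ∃ F : Finset (Sym2 V), ↑F ⊆ G.edgeSet ∧ F.card = k ∧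
      chromNum (G.deleteEdges ↑F) = chromNum G - 1}.Nonempty := by
    have hcol : (G.deleteEdges ↑(G.edgeSet.toFinite.toFinset)).Colorable (chromNum G - 1) := by
      have h1 : (G.deleteEdges ↑(G.edgeSet.toFinite.toFinset)).Colorable 1 := by
        refine ⟨SimpleGraph.Coloring.mk (fun _ => 0) ?_⟩
        intro v w hadj
        exfalso
        rw [SimpleGraph.deleteEdges_adj, Set.Finite.coe_toFinset] at hadj
        exact hadj.2 ((G.mem_edgeSet).mpr hadj.1)
      exact h1.mono (by omega)
    obtain ⟨F, hsub, hcard, hchrom⟩ :=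
      edge_IV G hchi2 _ (by rw [Set.Finite.coe_toFinset]) hcol
    exact ⟨F.card, F, hsub, rfl, hchrom⟩
  have hvsne : {k : ℕ | ∃ S : Finset V, S.card = k ∧
      chromNum (G.induce ((S : Set V))ᶜ) = chromNum G - 1}.Nonempty := by
    have hcol : (G.induce ((↑(Finset.univ : Finset V) : Set V))ᶜ).Colorable (chromNum G - 1) := by
      haveI : IsEmpty ((↑(Finset.univ : Finset V) : Set V)ᶜ : Set V) :=
        ⟨fun v => by simpa using v.2⟩
      exact SimpleGraph.Colorable.of_isEmpty (G := _) _
    obtain ⟨S, hcard, hchrom⟩ := vertex_IV G hchi2 Finset.univ hcol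
    exact ⟨S.card, S, rfl, hchrom⟩
  apply le_antisymm
  · -- vsChi ≤ esChi
    have hmem : esChi G ∈ {k : ℕ | ∃ F : Finset (Sym2 V), ↑F ⊆ G.edgeSet ∧ F.card = k ∧
        chromNum (G.deleteEdges ↑F) = chromNum G - 1} := Nat.sInf_mem hesne
    obtain ⟨F, hFsub, hFcard, hFchrom⟩ := hmem
    set S1 : Finset V := F.image (fun e => e.out.1) with hS1
    have hcolH : (G.deleteEdges ↑F).Colorable (chromNum G - 1) := by
      rw [← hFchrom]
      exact colorable_chromNum _
    have hle : G.induce ((↑S1 : Set V))ᶜ ≤ (G.deleteEdges ↑F).induce ((↑S1 : Set V))ᶜ := by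
      intro u v huv
      have hGadj : G.Adj ↑u ↑v := huv
      show (G.deleteEdges ↑F).Adj ↑u ↑v
      rw [SimpleGraph.deleteEdges_adj]
      refine ⟨hGadj, fun hmem2 => ?_⟩
      have h1 : (s((↑u : V), (↑v : V)) : Sym2 V).out.1 ∈ S1 :=
        Finset.mem_image.mpr ⟨_, Finset.mem_coe.mp hmem2, rfl⟩
      have h2 := Sym2.out_fst_mem (s((↑u : V), (↑v : V)))
      rw [Sym2.mem_iff] at h2
      have hu2 := u.2
      have hv2 := v.2
      simp only [Set.mem_compl_iff, Finset.mem_coe] at hu2 hv2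
      rcases h2 with h2 | h2
      · exact hu2 (h2 ▸ h1)
      · exact hv2 (h2 ▸ h1)
    have hcolS1 : (G.induce ((↑S1 : Set V))ᶜ).Colorable (chromNum G - 1) :=
      SimpleGraph.Colorable.mono_left hle
        (hcolH.of_hom (SimpleGraph.Embedding.induce _).toHom)
    obtain ⟨S, hScard, hSchrom⟩ := vertex_IV G hchi2 S1 hcolS1
    have hvs_le : vsChi G ≤ S.card := Nat.sInf_le ⟨S, rfl, hSchrom⟩
    calc vsChi G ≤ S.card := hvs_le
      _ ≤ S1.card := hScard
      _ ≤ F.card := Finset.card_image_le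
      _ = esChi G := hFcard
  · -- esChi ≤ vsChi
    have hmem : vsChi G ∈ {k : ℕ | ∃ S : Finset V, S.card = k ∧
        chromNum (G.induce ((S : Set V))ᶜ) = chromNum G - 1} := Nat.sInf_mem hvsne
    obtain ⟨S, hScard, hSchrom⟩ := hmem
    have hcol : (G.induce ((↑S : Set V))ᶜ).Colorable (chromNum G - 1) := by
      rw [← hSchrom]
      exact colorable_chromNum _
    obtain ⟨F, hFsub, hFcard, hFcol⟩ := greedy (by omega : 0 < chromNum G - 1) S G hΔ hcol
    obtain ⟨F', hF'sub, hF'card, hF'chrom⟩ := edge_IV G hchi2 F hFsub hFcol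
    have hes_le : esChi G ≤ F'.card := Nat.sInf_le ⟨F', hF'sub, rfl, hF'chrom⟩
    calc esChi G ≤ F'.card := hes_le
      _ ≤ F.card := hF'card
      _ ≤ S.card := hFcard
      _ = vsChi G := hScard
end
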